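/- Let B ∈ ℝ^{m×n} be a nonnegative matrix with no zero rows or columns, and let R ∈ ℝ^{m×m}, C ∈ ℝ^{n×n} be the unique diagonal matrices with B𝟙 = R𝟙 and 𝟙ᵀB = 𝟙ᵀC. Then for all S ⊆ [m], T ⊆ [n]: |⟨χ_S,Bχ_T⟩ − ⟨χ_S,B𝟙⟩⟨𝟙,Bχ_T⟩/⟨𝟙,B𝟙⟩| ≤ σ₂(R^{-1/2}BC^{-1/2}) · sqrt( (⟨χ_S,B𝟙⟩ − ⟨χ_S,B𝟙⟩²/⟨𝟙,B𝟙⟩) · (⟨𝟙,Bχ_T⟩ − ⟨𝟙,Bχ_T⟩²/⟨𝟙,B𝟙⟩) ). -/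

import Mathlib

open Matrix Finset

lemma coord_ineq {n : ℕ} (hn : 2 ≤ n) (lam c d : Fin n → ℝ)
    (s : Fin n → ℝ) (hsmono : Antitone s) (e : Fin n ≃ Fin n)
    (hlam : ∀ i, lam i = s (e.symm i))
    (hle : ∀ i, lam i ≤ 1)
    (hd : ∀ i, lam i * d i = d i)
    (hdd : ∑ i, d i * d i = 1)
    (hcd : ∑ i, c i * d i = 0) :
    ∑ i, lam i * c i ^ 2 ≤ s ⟨1, Nat.lt_of_lt_of_le one_lt_two hn⟩ * ∑ i, c i ^ 2 := by
  set s1 : ℝ := s ⟨1, by omega⟩ with hs1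
  rcases le_or_gt 1 s1 with h1 | h1
  · have : ∑ i, lam i * c i ^ 2 ≤ ∑ i, c i ^ 2 := by
      apply Finset.sum_le_sum
      intro i _
      nlinarith [sq_nonneg (c i), hle i]
    have h2 : (0:ℝ) ≤ ∑ i, c i ^ 2 := Finset.sum_nonneg fun i _ => sq_nonneg _
    nlinarith
  · -- second eigenvalue < 1 : eigenvalue 1 has multiplicity one
    set i0 : Fin n := e ⟨0, by omega⟩ with hi0
    have hlam_lt : ∀ i, i ≠ i0 → lam i ≤ s1 := by
      intro i hi
      rw [hlam i]
      apply hsmono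
      have hne : e.symm i ≠ ⟨0, by omega⟩ := by
        intro h
        apply hi
        rw [hi0, ← h, Equiv.apply_symm_apply]
      have : 1 ≤ (e.symm i).val := by
        by_contra hl
        apply hne
        apply Fin.ext
        show (e.symm i).val = (0:ℕ)
        omega
      exact this
    have hdz : ∀ i, i ≠ i0 → d i = 0 := by
      intro i hi
      have h := hd i
      have : lam i < 1 := lt_of_le_of_lt (hlam_lt i hi) h1
      by_contra hz
      have : (lam i - 1) * d i = 0 := by linarith
      rcases mul_eq_zero.1 this with h' | h'
      · linarith
      · exact hz h' 
    have hci0 : c i0 * d i0 = 0 := by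
      rw [← hcd]
      symm
      apply Finset.sum_eq_single_of_mem i0 (Finset.mem_univ _)
      intro i _ hi
      rw [hdz i hi, mul_zero]
    have hdi0 : d i0 * d i0 = 1 := by
      rw [← hdd]
      symm
      apply Finset.sum_eq_single_of_mem i0 (Finset.mem_univ _)
      intro i _ hi
      rw [hdz i hi, mul_zero]
    have hc0 : c i0 = 0 := by
      rcases mul_eq_zero.1 hci0 with h | h
      · exact h
      · rw [h, mul_zero] at hdi0; norm_num at hdi0
    rw [Finset.mul_sum]
    apply Finset.sum_le_sum
    intro i _
    rcases eq_or_ne i i0 with rfl | hi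
    · rw [hc0]; ring_nf; exact le_refl _
    · nlinarith [sq_nonneg (c i), hlam_lt i hi]

lemma unitary_facts {n : ℕ} (A : Matrix (Fin n) (Fin n) ℝ) (hA : A.IsHermitian) :
    ∃ U : Matrix (Fin n) (Fin n) ℝ,
      Uᵀ * U = 1 ∧ U * Uᵀ = 1 ∧ A = U * Matrix.diagonal hA.eigenvalues * Uᵀ := by
  have hstar : star (hA.eigenvectorUnitary : Matrix (Fin n) (Fin n) ℝ)
      = (hA.eigenvectorUnitary : Matrix (Fin n) (Fin n) ℝ)ᵀ := by
    ext i j; simp [Matrix.star_eq_conjTranspose, Matrix.conjTranspose_apply]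
  refine ⟨(hA.eigenvectorUnitary : Matrix (Fin n) (Fin n) ℝ), ?_, ?_, ?_⟩
  · have := Unitary.coe_star_mul_self hA.eigenvectorUnitary
    rwa [hstar] at this
  · have := Unitary.coe_mul_star_self hA.eigenvectorUnitary
    rw [Unitary.coe_star, hstar] at this
    exact this
  · have := hA.spectral_theorem
    rw [Unitary.conjStarAlgAut_apply, hstar] at this
    simpa using this

lemma spec_bound {n : ℕ} (hn : 2 ≤ n) (A : Matrix (Fin n) (Fin n) ℝ) (hA : A.IsHermitian)
    (s : Fin n → ℝ) (hsmono : Antitone s) (e : Fin n ≃ Fin n)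
    (hs : ∀ i, s i = hA.eigenvalues (e i))
    (hle : ∀ i, hA.eigenvalues i ≤ 1)
    (v : Fin n → ℝ) (hv : A *ᵥ v = v) (hvn : v ⬝ᵥ v = 1)
    (q : Fin n → ℝ) (hq : q ⬝ᵥ v = 0) :
    q ⬝ᵥ (A *ᵥ q) ≤ s ⟨1, Nat.lt_of_lt_of_le one_lt_two hn⟩ * (q ⬝ᵥ q) := by
  obtain ⟨U, hU1, hU2, hspec⟩ := unitary_facts A hA
  have dot_trans : ∀ x w : Fin n → ℝ, x ⬝ᵥ (U *ᵥ w) = (Uᵀ *ᵥ x) ⬝ᵥ w := by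
    intro x w
    rw [dotProduct_mulVec, mulVec_transpose]
  have hUid : ∀ x : Fin n → ℝ, U *ᵥ (Uᵀ *ᵥ x) = x := by
    intro x; rw [mulVec_mulVec, hU2, one_mulVec]
  have hAform : ∀ x : Fin n → ℝ, A *ᵥ x = U *ᵥ (Matrix.diagonal hA.eigenvalues *ᵥ (Uᵀ *ᵥ x)) := by
    intro x
    conv_lhs => rw [hspec]
    rw [← mulVec_mulVec, ← mulVec_mulVec]
  have hVU : ∀ x : Fin n → ℝ, Uᵀ *ᵥ (U *ᵥ x) = x := by
    intro x; rw [mulVec_mulVec, hU1, one_mulVec]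
  have hDd : ∀ i, hA.eigenvalues i * (Uᵀ *ᵥ v) i = (Uᵀ *ᵥ v) i := by
    intro i
    have h1 : U *ᵥ (Matrix.diagonal hA.eigenvalues *ᵥ (Uᵀ *ᵥ v)) = U *ᵥ (Uᵀ *ᵥ v) := by
      rw [← hAform, hv, hUid]
    have h3 : Matrix.diagonal hA.eigenvalues *ᵥ (Uᵀ *ᵥ v) = Uᵀ *ᵥ v := by
      rw [← hVU (Matrix.diagonal hA.eigenvalues *ᵥ (Uᵀ *ᵥ v)), h1, hVU]
    have := congrFun h3 i
    rwa [mulVec_diagonal] at this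
  have hAq : q ⬝ᵥ (A *ᵥ q) = ∑ i, hA.eigenvalues i * (Uᵀ *ᵥ q) i ^ 2 := by
    rw [hAform, dot_trans]
    simp only [dotProduct, mulVec_diagonal]
    exact Finset.sum_congr rfl fun i _ => by ring
  have dot2 : ∀ x y : Fin n → ℝ, x ⬝ᵥ y = (Uᵀ *ᵥ x) ⬝ᵥ (Uᵀ *ᵥ y) := by
    intro x y
    conv_lhs => rw [← hUid y]
    rw [dot_trans]
  have hqq : q ⬝ᵥ q = ∑ i, (Uᵀ *ᵥ q) i ^ 2 := by
    rw [dot2 q q]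
    simp only [dotProduct]
    exact Finset.sum_congr rfl fun i _ => by ring
  have hqv : ∑ i, (Uᵀ *ᵥ q) i * (Uᵀ *ᵥ v) i = 0 := by
    rw [← hq, dot2 q v]
    rfl
  have hvv : ∑ i, (Uᵀ *ᵥ v) i * (Uᵀ *ᵥ v) i = 1 := by
    rw [← hvn, dot2 v v]
    rfl
  rw [hAq, hqq]
  exact coord_ineq hn hA.eigenvalues (Uᵀ *ᵥ q) (Uᵀ *ᵥ v) s hsmono e
    (fun i => by rw [hs (e.symm i), Equiv.apply_symm_apply]) hle hDd hvv hqv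


open Matrix Finset

/-- **Strengthened Butler Expander Mixing Lemma** (Corollary of Theorem 8 of the paper),
with `R`/`C` the diagonal matrices of row/column sums of `B`. -/
theorem butler_expander_mixing {m n : ℕ} (hn : 2 ≤ n)
    (B : Matrix (Fin m) (Fin n) ℝ)
    (hBnn : ∀ i j, 0 ≤ B i j)
    (hrow : ∀ i, ∃ j, B i j ≠ 0) (hcol : ∀ j, ∃ i, B i j ≠ 0)
    (R : Matrix (Fin m) (Fin m) ℝ) (C : Matrix (Fin n) (Fin n) ℝ)
    (hRdef : R = Matrix.diagonal fun i => ∑ j, B i j)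
    (hCdef : C = Matrix.diagonal fun j => ∑ i, B i j)
    (M : Matrix (Fin m) (Fin n) ℝ)
    (hM : M = (Matrix.diagonal fun i => (Real.sqrt (R i i))⁻¹) * B *
        (Matrix.diagonal fun j => (Real.sqrt (C j j))⁻¹))
    (hMM : (Mᵀ * M).IsHermitian)
    -- `s` lists the eigenvalues of `MᵀM` in nonincreasing order, so that
    -- `Real.sqrt (s ⟨1,_⟩)` is the second largest singular value of `M`.
    (s : Fin n → ℝ) (hsmono : Antitone s)
    (hs : ∃ e : Fin n ≃ Fin n, ∀ i, s i = hMM.eigenvalues (e i))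
    (S : Finset (Fin m)) (T : Finset (Fin n)) :
    |(fun i => if i ∈ S then (1 : ℝ) else 0) ⬝ᵥ
        (B *ᵥ fun j => if j ∈ T then (1 : ℝ) else 0)
      - ((fun i => if i ∈ S then (1 : ℝ) else 0) ⬝ᵥ (B *ᵥ fun _ => (1 : ℝ))) *
          ((fun _ => (1 : ℝ)) ⬝ᵥ (B *ᵥ fun j => if j ∈ T then (1 : ℝ) else 0)) /
          ((fun _ => (1 : ℝ)) ⬝ᵥ (B *ᵥ fun _ => (1 : ℝ)))|
      ≤ Real.sqrt (s ⟨1, by omega⟩) *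
        Real.sqrt
          ((((fun i => if i ∈ S then (1 : ℝ) else 0) ⬝ᵥ (B *ᵥ fun _ => (1 : ℝ))) -
              ((fun i => if i ∈ S then (1 : ℝ) else 0) ⬝ᵥ (B *ᵥ fun _ => (1 : ℝ))) ^ 2 /
                ((fun _ => (1 : ℝ)) ⬝ᵥ (B *ᵥ fun _ => (1 : ℝ)))) *
            (((fun _ => (1 : ℝ)) ⬝ᵥ (B *ᵥ fun j => if j ∈ T then (1 : ℝ) else 0)) -
              ((fun _ => (1 : ℝ)) ⬝ᵥ (B *ᵥ fun j => if j ∈ T then (1 : ℝ) else 0)) ^ 2 /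
                ((fun _ => (1 : ℝ)) ⬝ᵥ (B *ᵥ fun _ => (1 : ℝ))))) := by
  obtain ⟨e, he⟩ := hs
  -- abbreviations
  set χS : Fin m → ℝ := fun i => if i ∈ S then (1 : ℝ) else 0 with hχS
  set χT : Fin n → ℝ := fun j => if j ∈ T then (1 : ℝ) else 0 with hχT
  set r : Fin m → ℝ := fun i => ∑ j, B i j with hrdef
  set c : Fin n → ℝ := fun j => ∑ i, B i j with hcdef
  set τ : ℝ := ∑ i, ∑ j, B i j with hτdef
  set volS : ℝ := ∑ i, χS i * r i with hvolS
  set volT : ℝ := ∑ j, χT j * c j with hvolT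
  set eST : ℝ := ∑ i, ∑ j, χS i * χT j * B i j with heST
  -- positivity
  have hrpos : ∀ i, 0 < r i := by
    intro i
    obtain ⟨j, hj⟩ := hrow i
    exact Finset.sum_pos' (fun j _ => hBnn i j)
      ⟨j, Finset.mem_univ j, lt_of_le_of_ne (hBnn i j) (Ne.symm hj)⟩
  have hcpos : ∀ j, 0 < c j := by
    intro j
    obtain ⟨i, hi⟩ := hcol j
    exact Finset.sum_pos' (fun i _ => hBnn i j)
      ⟨i, Finset.mem_univ i, lt_of_le_of_ne (hBnn i j) (Ne.symm hi)⟩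
  have hτr : τ = ∑ i, r i := rfl
  have hτc : τ = ∑ j, c j := Finset.sum_comm
  have hτpos : 0 < τ := by
    obtain ⟨i0, _⟩ := hcol ⟨0, by omega⟩
    rw [hτr]
    exact Finset.sum_pos' (fun i _ => (hrpos i).le) ⟨i0, Finset.mem_univ i0, hrpos i0⟩
  have hτne : τ ≠ 0 := ne_of_gt hτpos
  -- sqrt facts
  have hsr : ∀ i, Real.sqrt (r i) * Real.sqrt (r i) = r i :=
    fun i => Real.mul_self_sqrt (hrpos i).le
  have hsc : ∀ j, Real.sqrt (c j) * Real.sqrt (c j) = c j :=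
    fun j => Real.mul_self_sqrt (hcpos j).le
  have hsrne : ∀ i, Real.sqrt (r i) ≠ 0 :=
    fun i => ne_of_gt (Real.sqrt_pos.2 (hrpos i))
  have hscne : ∀ j, Real.sqrt (c j) ≠ 0 :=
    fun j => ne_of_gt (Real.sqrt_pos.2 (hcpos j))
  have hsτ : Real.sqrt τ * Real.sqrt τ = τ := Real.mul_self_sqrt hτpos.le
  have hsτne : Real.sqrt τ ≠ 0 := ne_of_gt (Real.sqrt_pos.2 hτpos)
  -- entries of M
  have hMij : ∀ i j, M i j = (Real.sqrt (r i))⁻¹ * B i j * (Real.sqrt (c j))⁻¹ := by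
    intro i j
    rw [hM, Matrix.mul_diagonal, Matrix.diagonal_mul, hRdef, hCdef,
      Matrix.diagonal_apply_eq, Matrix.diagonal_apply_eq]
  -- the vectors
  set α : ℝ := volS / τ with hα
  set β : ℝ := volT / τ with hβ
  set p : Fin m → ℝ := fun i => Real.sqrt (r i) * (χS i - α) with hp
  set q : Fin n → ℝ := fun j => Real.sqrt (c j) * (χT j - β) with hq
  set v : Fin n → ℝ := fun j => Real.sqrt (c j) / Real.sqrt τ with hv
  set u : Fin m → ℝ := fun i => Real.sqrt (r i) / Real.sqrt τ with hu
  -- χ squares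
  have hχS2 : ∀ i, χS i * χS i = χS i := by
    intro i; rw [hχS]; by_cases h : i ∈ S <;> simp [h]
  have hχT2 : ∀ j, χT j * χT j = χT j := by
    intro j; rw [hχT]; by_cases h : j ∈ T <;> simp [h]
  -- goal reduction
  have g1 : χS ⬝ᵥ (B *ᵥ χT) = eST := by
    simp only [Matrix.mulVec, dotProduct, Finset.mul_sum]
    exact Finset.sum_congr rfl fun i _ => Finset.sum_congr rfl fun j _ => by ring
  have g2 : χS ⬝ᵥ (B *ᵥ fun _ => (1:ℝ)) = volS := by
    simp only [Matrix.mulVec, dotProduct, mul_one]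
    rfl
  have g3 : (fun _ => (1:ℝ)) ⬝ᵥ (B *ᵥ χT) = volT := by
    simp only [Matrix.mulVec, dotProduct, one_mul]
    rw [Finset.sum_comm]
    refine Finset.sum_congr rfl fun j _ => ?_
    rw [← Finset.sum_mul, mul_comm]
  have g4 : (fun _ => (1:ℝ)) ⬝ᵥ (B *ᵥ fun _ => (1:ℝ)) = τ := by
    simp only [Matrix.mulVec, dotProduct, one_mul, mul_one]
    rfl
  rw [g1, g2, g3, g4]
  -- M maps v to u and back
  have hMv : M *ᵥ v = u := by
    funext i
    show ∑ j, M i j * v j = u i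
    have hterm : ∀ j, M i j * v j = B i j * ((Real.sqrt (r i))⁻¹ / Real.sqrt τ) := by
      intro j
      rw [hMij]
      show (Real.sqrt (r i))⁻¹ * B i j * (Real.sqrt (c j))⁻¹ *
        (Real.sqrt (c j) / Real.sqrt τ) = _
      rw [div_eq_mul_inv, div_eq_mul_inv]
      calc (Real.sqrt (r i))⁻¹ * B i j * (Real.sqrt (c j))⁻¹ *
            (Real.sqrt (c j) * (Real.sqrt τ)⁻¹)
          = ((Real.sqrt (c j)) * (Real.sqrt (c j))⁻¹) *
            (B i j * ((Real.sqrt (r i))⁻¹ * (Real.sqrt τ)⁻¹)) := by ring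
        _ = B i j * ((Real.sqrt (r i))⁻¹ * (Real.sqrt τ)⁻¹) := by
            rw [mul_inv_cancel₀ (hscne j), one_mul]
    rw [Finset.sum_congr rfl fun j _ => hterm j, ← Finset.sum_mul]
    show r i * ((Real.sqrt (r i))⁻¹ / Real.sqrt τ) = Real.sqrt (r i) / Real.sqrt τ
    rw [← hsr i]
    field_simp
    rw [Real.sqrt_sq (Real.sqrt_nonneg _), pow_two, mul_self_div_self]
  have hMtu : Mᵀ *ᵥ u = v := by
    funext j
    show ∑ i, Mᵀ j i * u i = v j
    have hterm : ∀ i, Mᵀ j i * u i = B i j * ((Real.sqrt (c j))⁻¹ / Real.sqrt τ) := by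
      intro i
      rw [Matrix.transpose_apply, hMij]
      show (Real.sqrt (r i))⁻¹ * B i j * (Real.sqrt (c j))⁻¹ *
        (Real.sqrt (r i) / Real.sqrt τ) = _
      rw [div_eq_mul_inv, div_eq_mul_inv]
      calc (Real.sqrt (r i))⁻¹ * B i j * (Real.sqrt (c j))⁻¹ *
            (Real.sqrt (r i) * (Real.sqrt τ)⁻¹)
          = ((Real.sqrt (r i)) * (Real.sqrt (r i))⁻¹) *
            (B i j * ((Real.sqrt (c j))⁻¹ * (Real.sqrt τ)⁻¹)) := by ring
        _ = B i j * ((Real.sqrt (c j))⁻¹ * (Real.sqrt τ)⁻¹) := by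
            rw [mul_inv_cancel₀ (hsrne i), one_mul]
    rw [Finset.sum_congr rfl fun i _ => hterm i, ← Finset.sum_mul]
    show c j * ((Real.sqrt (c j))⁻¹ / Real.sqrt τ) = Real.sqrt (c j) / Real.sqrt τ
    rw [← hsc j]
    field_simp
    rw [Real.sqrt_sq (Real.sqrt_nonneg _), pow_two, mul_self_div_self]
  have hAv : (Mᵀ * M) *ᵥ v = v := by
    rw [← Matrix.mulVec_mulVec, hMv, hMtu]
  have hvv : v ⬝ᵥ v = 1 := by
    show ∑ j, v j * v j = 1
    have hterm : ∀ j, v j * v j = c j * τ⁻¹ := by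
      intro j
      show Real.sqrt (c j) / Real.sqrt τ * (Real.sqrt (c j) / Real.sqrt τ) = _
      rw [div_mul_div_comm, hsc j, hsτ, div_eq_mul_inv]
    rw [Finset.sum_congr rfl fun j _ => hterm j, ← Finset.sum_mul, ← hτc,
      mul_inv_cancel₀ hτne]
  have hqv : q ⬝ᵥ v = 0 := by
    show ∑ j, q j * v j = 0
    have hterm : ∀ j, q j * v j = (χT j * c j) * (Real.sqrt τ)⁻¹ - β * (c j * (Real.sqrt τ)⁻¹) := by
      intro j
      show Real.sqrt (c j) * (χT j - β) * (Real.sqrt (c j) / Real.sqrt τ) = _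
      rw [div_eq_mul_inv]
      calc Real.sqrt (c j) * (χT j - β) * (Real.sqrt (c j) * (Real.sqrt τ)⁻¹)
          = (Real.sqrt (c j) * Real.sqrt (c j)) * ((χT j - β) * (Real.sqrt τ)⁻¹) := by ring
        _ = c j * ((χT j - β) * (Real.sqrt τ)⁻¹) := by rw [hsc j]
        _ = _ := by ring
    rw [Finset.sum_congr rfl fun j _ => hterm j, Finset.sum_sub_distrib,
      ← Finset.sum_mul, ← Finset.mul_sum, ← Finset.sum_mul, ← hτc]
    rw [hβ]
    field_simp
    rw [← hvolT]
    linear_combination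
  -- norms of p and q
  have hpp : p ⬝ᵥ p = volS - volS ^ 2 / τ := by
    have step : p ⬝ᵥ p = volS - 2 * α * volS + α ^ 2 * τ := by
      show ∑ i, p i * p i = _
      have hterm : ∀ i, p i * p i = χS i * r i - 2 * α * (χS i * r i) + α ^ 2 * r i := by
        intro i
        show Real.sqrt (r i) * (χS i - α) * (Real.sqrt (r i) * (χS i - α)) = _
        calc Real.sqrt (r i) * (χS i - α) * (Real.sqrt (r i) * (χS i - α))
            = (Real.sqrt (r i) * Real.sqrt (r i)) *
              ((χS i * χS i) - 2 * α * χS i + α ^ 2) := by ring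
          _ = r i * (χS i - 2 * α * χS i + α ^ 2) := by rw [hsr i, hχS2 i]
          _ = _ := by ring
      rw [Finset.sum_congr rfl fun i _ => hterm i, Finset.sum_add_distrib,
        Finset.sum_sub_distrib, ← Finset.mul_sum, ← Finset.mul_sum, ← hτr]
    rw [step, hα]
    field_simp
    ring
  have hqq : q ⬝ᵥ q = volT - volT ^ 2 / τ := by
    have step : q ⬝ᵥ q = volT - 2 * β * volT + β ^ 2 * τ := by
      show ∑ j, q j * q j = _
      have hterm : ∀ j, q j * q j = χT j * c j - 2 * β * (χT j * c j) + β ^ 2 * c j := by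
        intro j
        show Real.sqrt (c j) * (χT j - β) * (Real.sqrt (c j) * (χT j - β)) = _
        calc Real.sqrt (c j) * (χT j - β) * (Real.sqrt (c j) * (χT j - β))
            = (Real.sqrt (c j) * Real.sqrt (c j)) *
              ((χT j * χT j) - 2 * β * χT j + β ^ 2) := by ring
          _ = c j * (χT j - 2 * β * χT j + β ^ 2) := by rw [hsc j, hχT2 j]
          _ = _ := by ring
      rw [Finset.sum_congr rfl fun j _ => hterm j, Finset.sum_add_distrib,
        Finset.sum_sub_distrib, ← Finset.mul_sum, ← Finset.mul_sum, ← hτc]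
    rw [step, hβ]
    field_simp
    ring
  -- the bilinear form identity
  have hPMQ : p ⬝ᵥ (M *ᵥ q) = eST - volS * volT / τ := by
    have step : p ⬝ᵥ (M *ᵥ q) = eST - β * volS - α * volT + α * β * τ := by
      have A2 : ∑ i, ∑ j, χT j * B i j = volT := by
        rw [Finset.sum_comm]
        exact Finset.sum_congr rfl fun j _ => by rw [← Finset.mul_sum]
      have hterm : ∀ i j, p i * (M i j * q j) =
          χS i * χT j * B i j - β * (χS i * B i j) - α * (χT j * B i j)
            + α * β * B i j := by
        intro i j
        rw [hMij]
        show Real.sqrt (r i) * (χS i - α) *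
          ((Real.sqrt (r i))⁻¹ * B i j * (Real.sqrt (c j))⁻¹ *
            (Real.sqrt (c j) * (χT j - β))) = _
        calc Real.sqrt (r i) * (χS i - α) *
              ((Real.sqrt (r i))⁻¹ * B i j * (Real.sqrt (c j))⁻¹ *
                (Real.sqrt (c j) * (χT j - β)))
            = ((Real.sqrt (r i) * (Real.sqrt (r i))⁻¹) *
                (Real.sqrt (c j) * (Real.sqrt (c j))⁻¹)) *
              (B i j * ((χS i - α) * (χT j - β))) := by ring
          _ = B i j * ((χS i - α) * (χT j - β)) := by
              rw [mul_inv_cancel₀ (hsrne i), mul_inv_cancel₀ (hscne j)]; ring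
          _ = _ := by ring
      show ∑ i, p i * ∑ j, M i j * q j = _
      simp only [Finset.mul_sum]
      rw [Finset.sum_congr rfl fun i _ => Finset.sum_congr rfl fun j _ => hterm i j]
      simp only [Finset.sum_add_distrib, Finset.sum_sub_distrib, ← Finset.mul_sum]
      rw [A2]
    rw [step, hα, hβ]
    field_simp
    ring
  -- contraction property
  have hcontr : ∀ w : Fin n → ℝ, (M *ᵥ w) ⬝ᵥ (M *ᵥ w) ≤ w ⬝ᵥ w := by
    intro w
    have hterm : ∀ i, (M *ᵥ w) i * (M *ᵥ w) i ≤ ∑ j, B i j * (w j ^ 2 * (c j)⁻¹) := by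
      intro i
      have hMw : (M *ᵥ w) i = (Real.sqrt (r i))⁻¹ * ∑ j, B i j * (w j * (Real.sqrt (c j))⁻¹) := by
        show ∑ j, M i j * w j = _
        rw [Finset.mul_sum]
        exact Finset.sum_congr rfl fun j _ => by rw [hMij]; ring
      have hCS := Finset.sum_mul_sq_le_sq_mul_sq Finset.univ
        (fun j => Real.sqrt (B i j)) (fun j => Real.sqrt (B i j) * (w j * (Real.sqrt (c j))⁻¹))
      have e1 : ∀ j, Real.sqrt (B i j) * (Real.sqrt (B i j) * (w j * (Real.sqrt (c j))⁻¹))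
          = B i j * (w j * (Real.sqrt (c j))⁻¹) := by
        intro j
        rw [← mul_assoc, Real.mul_self_sqrt (hBnn i j)]
      have e2 : ∀ j, (Real.sqrt (B i j)) ^ 2 = B i j := fun j => Real.sq_sqrt (hBnn i j)
      have e3 : ∀ j, (Real.sqrt (B i j) * (w j * (Real.sqrt (c j))⁻¹)) ^ 2
          = B i j * (w j ^ 2 * (c j)⁻¹) := by
        intro j
        have h4 : ((Real.sqrt (c j))⁻¹) ^ 2 = (c j)⁻¹ := by
          rw [← Real.sqrt_inv, Real.sq_sqrt (inv_nonneg.2 (hcpos j).le)]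
        rw [mul_pow, e2, mul_pow, h4]
      rw [Finset.sum_congr rfl fun j _ => e1 j, Finset.sum_congr rfl fun j _ => e2 j,
        Finset.sum_congr rfl fun j _ => e3 j] at hCS
      have hri : (∑ j, B i j) = r i := rfl
      rw [hri] at hCS
      calc (M *ᵥ w) i * (M *ᵥ w) i
          = ((Real.sqrt (r i))⁻¹ * (Real.sqrt (r i))⁻¹) *
            (∑ j, B i j * (w j * (Real.sqrt (c j))⁻¹)) ^ 2 := by rw [hMw]; ring
        _ ≤ ((Real.sqrt (r i))⁻¹ * (Real.sqrt (r i))⁻¹) *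
            (r i * ∑ j, B i j * (w j ^ 2 * (c j)⁻¹)) := by
            apply mul_le_mul_of_nonneg_left hCS
            positivity
        _ = (((Real.sqrt (r i))⁻¹ * (Real.sqrt (r i))⁻¹) * (Real.sqrt (r i) * Real.sqrt (r i))) *
            ∑ j, B i j * (w j ^ 2 * (c j)⁻¹) := by rw [hsr i]; ring
        _ = ∑ j, B i j * (w j ^ 2 * (c j)⁻¹) := by
            have h1 : (Real.sqrt (r i))⁻¹ * (Real.sqrt (r i))⁻¹ *
                (Real.sqrt (r i) * Real.sqrt (r i)) = 1 := by
              rw [show (Real.sqrt (r i))⁻¹ * (Real.sqrt (r i))⁻¹ *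
                  (Real.sqrt (r i) * Real.sqrt (r i))
                = (Real.sqrt (r i) * (Real.sqrt (r i))⁻¹) *
                  (Real.sqrt (r i) * (Real.sqrt (r i))⁻¹) from by ring,
                mul_inv_cancel₀ (hsrne i), mul_one]
            rw [h1, one_mul]
    calc (M *ᵥ w) ⬝ᵥ (M *ᵥ w) = ∑ i, (M *ᵥ w) i * (M *ᵥ w) i := rfl
      _ ≤ ∑ i, ∑ j, B i j * (w j ^ 2 * (c j)⁻¹) := Finset.sum_le_sum fun i _ => hterm i
      _ = ∑ j, (∑ i, B i j) * (w j ^ 2 * (c j)⁻¹) := by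
          rw [Finset.sum_comm]
          exact Finset.sum_congr rfl fun j _ => by rw [← Finset.sum_mul]
      _ = ∑ j, w j * w j := by
          refine Finset.sum_congr rfl fun j _ => ?_
          have : (∑ i, B i j) = c j := rfl
          rw [this]
          field_simp [ne_of_gt (hcpos j)]
      _ = w ⬝ᵥ w := rfl
  -- transfer identity
  have hmq : ∀ w : Fin n → ℝ, (M *ᵥ w) ⬝ᵥ (M *ᵥ w) = w ⬝ᵥ ((Mᵀ * M) *ᵥ w) := by
    intro w
    have h : w ⬝ᵥ ((Mᵀ * M) *ᵥ w) = (M *ᵥ w) ⬝ᵥ (M *ᵥ w) := by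
      rw [← Matrix.mulVec_mulVec, Matrix.dotProduct_mulVec w Mᵀ, Matrix.vecMul_transpose]
    exact h.symm
  -- eigenvalue bound
  have heig : ∀ i, hMM.eigenvalues i ≤ 1 := by
    intro i
    have hw := hMM.mulVec_eigenvectorBasis i
    set w : Fin n → ℝ := ⇑(hMM.eigenvectorBasis i) with hwdef
    have hwn : w ⬝ᵥ w = 1 := by
      have h1 : ‖hMM.eigenvectorBasis i‖ = 1 := hMM.eigenvectorBasis.orthonormal.1 i
      have h2 : (inner ℝ (hMM.eigenvectorBasis i) (hMM.eigenvectorBasis i) : ℝ) = 1 := by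
        rw [real_inner_self_eq_norm_mul_norm, h1, mul_one]
      rw [← h2]
      simp only [PiLp.inner_apply, RCLike.inner_apply, starRingEnd_apply, star_trivial]
      rfl
    have h3 : w ⬝ᵥ ((Mᵀ * M) *ᵥ w) = hMM.eigenvalues i := by
      rw [hw]
      show w ⬝ᵥ (hMM.eigenvalues i • w) = _
      rw [dotProduct_smul, hwn, smul_eq_mul, mul_one]
    have h4 := hcontr w
    rw [hmq w, h3, hwn] at h4
    exact h4
  -- finish
  have hppnn : 0 ≤ p ⬝ᵥ p := Finset.sum_nonneg fun i _ => mul_self_nonneg _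
  have hqqnn : 0 ≤ q ⬝ᵥ q := Finset.sum_nonneg fun j _ => mul_self_nonneg _
  have hspec := spec_bound hn (Mᵀ * M) hMM s hsmono e he heig v hAv hvv q hqv
  have hsq : (p ⬝ᵥ (M *ᵥ q)) ^ 2 ≤ s ⟨1, by omega⟩ * ((p ⬝ᵥ p) * (q ⬝ᵥ q)) := by
    have hCS : (p ⬝ᵥ (M *ᵥ q)) ^ 2 ≤ (p ⬝ᵥ p) * ((M *ᵥ q) ⬝ᵥ (M *ᵥ q)) := by
      have h := Finset.sum_mul_sq_le_sq_mul_sq Finset.univ p (M *ᵥ q)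
      have e1 : p ⬝ᵥ p = ∑ i, p i ^ 2 :=
        Finset.sum_congr rfl fun i _ => (pow_two (p i)).symm
      have e2 : (M *ᵥ q) ⬝ᵥ (M *ᵥ q) = ∑ i, (M *ᵥ q) i ^ 2 :=
        Finset.sum_congr rfl fun i _ => (pow_two _).symm
      rw [e1, e2]
      exact h
    have h5 : (M *ᵥ q) ⬝ᵥ (M *ᵥ q) ≤ s ⟨1, by omega⟩ * (q ⬝ᵥ q) := by
      rw [hmq q]; exact hspec
    calc (p ⬝ᵥ (M *ᵥ q)) ^ 2 ≤ (p ⬝ᵥ p) * ((M *ᵥ q) ⬝ᵥ (M *ᵥ q)) := hCS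
      _ ≤ (p ⬝ᵥ p) * (s ⟨1, by omega⟩ * (q ⬝ᵥ q)) := mul_le_mul_of_nonneg_left h5 hppnn
      _ = s ⟨1, by omega⟩ * ((p ⬝ᵥ p) * (q ⬝ᵥ q)) := by ring
  calc |eST - volS * volT / τ|
      = |p ⬝ᵥ (M *ᵥ q)| := by rw [hPMQ]
    _ = Real.sqrt ((p ⬝ᵥ (M *ᵥ q)) ^ 2) := (Real.sqrt_sq_eq_abs _).symm
    _ ≤ Real.sqrt (s ⟨1, by omega⟩ * ((p ⬝ᵥ p) * (q ⬝ᵥ q))) := Real.sqrt_le_sqrt hsq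
    _ = Real.sqrt (s ⟨1, by omega⟩) * Real.sqrt ((p ⬝ᵥ p) * (q ⬝ᵥ q)) :=
        Real.sqrt_mul' _ (mul_nonneg hppnn hqqnn)
    _ = Real.sqrt (s ⟨1, by omega⟩) *
        Real.sqrt ((volS - volS ^ 2 / τ) * (volT - volT ^ 2 / τ)) := by rw [hpp, hqq]
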